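/- A Hamiltonian cycle system of order v (a set of Hamiltonian cycles of the complete graph K_v whose edges partition the edge set of K_v) exists if and only if v is odd and v ≥ 3. -/

import Mathlib

open Pointwise

variable {V : Type*}

/-- The action of a permutation on a simple graph by relabelling vertices. -/
instance permGraphAction : MulAction (Equiv.Perm V) (SimpleGraph V) where
  smul σ H := H.map σ.toEmbedding
  one_smul H := by
    show H.map (1 : Equiv.Perm V).toEmbedding = H
    ext a b
    simp [SimpleGraph.map_adj]
  mul_smul σ τ H := by
    ext a b
    show (H.map (σ * τ).toEmbedding).Adj a b ↔ ((H.map τ.toEmbedding).map σ.toEmbedding).Adj a b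
    simp only [SimpleGraph.map_adj (σ * τ).toEmbedding, SimpleGraph.map_adj σ.toEmbedding,
      SimpleGraph.map_adj τ.toEmbedding]
    simp only [SimpleGraph.map_adj, Equiv.coe_toEmbedding, Equiv.Perm.coe_mul,
      Function.comp_apply]
    constructor
    · rintro ⟨u, v, h, rfl, rfl⟩
      exact ⟨τ u, τ v, ⟨u, v, h, rfl, rfl⟩, rfl, rfl⟩
    · rintro ⟨-, -, ⟨u, v, h, rfl, rfl⟩, rfl, rfl⟩
      exact ⟨u, v, h, rfl, rfl⟩

lemma perm_smul_graph (σ : Equiv.Perm V) (H : SimpleGraph V) :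
    σ • H = H.map σ.toEmbedding := rfl

/-- A Hamiltonian cycle of the complete graph on `V`: a connected, 2-regular
(spanning) subgraph. -/
def IsHamCycle [Fintype V] (H : SimpleGraph V) : Prop :=
  H.Connected ∧ ∀ v : V, (H.neighborSet v).ncard = 2

/-- A Hamiltonian cycle system: a set of Hamiltonian cycles whose edge sets
partition the edge set of the complete graph. -/
def IsHCS [Fintype V] (𝓗 : Set (SimpleGraph V)) : Prop :=
  (∀ H ∈ 𝓗, IsHamCycle H) ∧
    ∀ e ∈ (⊤ : SimpleGraph V).edgeSet, ∃! H, H ∈ 𝓗 ∧ e ∈ H.edgeSet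

/-- The full automorphism group of a Hamiltonian cycle system, as the subgroup
of vertex permutations preserving the set of cycles. -/
def autHCS (𝓗 : Set (SimpleGraph V)) : Subgroup (Equiv.Perm V) :=
  MulAction.stabilizer (Equiv.Perm V) 𝓗

/-- The cycle graph traced by a map from `ZMod m` (consecutive residues are adjacent). -/
def cycleOn {W : Type*} (m : ℕ) (f : ZMod m → W) : SimpleGraph W :=
  SimpleGraph.fromRel (fun a b => ∃ i : ZMod m, f i = a ∧ f (i + 1) = b)

open SimpleGraph

lemma map_equiv_adj {V W : Type*} (e : V ≃ W) (H : SimpleGraph V) (x y : W) :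
    (H.map e.toEmbedding).Adj x y ↔ H.Adj (e.symm x) (e.symm y) := by
  simp only [SimpleGraph.map_adj e.toEmbedding, Equiv.coe_toEmbedding]
  constructor
  · rintro ⟨-, u, v, h, rfl, rfl⟩; simpa using h
  · intro h; exact ⟨fun hxy => h.ne (by rw [hxy]), e.symm x, e.symm y, h, by simp, by simp⟩

section constr
variable (n : ℕ)

def adjP (k : ZMod (2*n)) : Option (ZMod (2*n)) → Option (ZMod (2*n)) → Prop
  | some a, some b => a + b = 2*k ∨ a + b = 2*k + 1
  | some a, none => a = k ∨ a = k + n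
  | none, some b => b = k ∨ b = k + n
  | none, none => False

def Hk (k : ZMod (2*n)) : SimpleGraph (Option (ZMod (2*n))) where
  Adj x y := x ≠ y ∧ adjP n k x y
  symm := ⟨by
    rintro (_|a) (_|b) ⟨hne, h⟩
    · exact ⟨hne, h⟩
    · exact ⟨Ne.symm hne, by simpa [adjP] using h⟩
    · exact ⟨Ne.symm hne, by simpa [adjP] using h⟩
    · refine ⟨Ne.symm hne, ?_⟩
      simp only [adjP] at h ⊢
      rcases h with h | h
      · left; rw [← h]; ring
      · right; rw [← h]; ring⟩
  loopless := ⟨fun x h => h.1 rfl⟩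

lemma Hk_adj_some_some (k a b) : (Hk n k).Adj (some a) (some b) ↔
    a ≠ b ∧ (a + b = 2*k ∨ a + b = 2*k + 1) := by
  simp [Hk, adjP]

lemma Hk_adj_none_some (k b) : (Hk n k).Adj none (some b) ↔ (b = k ∨ b = k + n) := by
  simp [Hk, adjP]

lemma Hk_adj_some_none (k a) : (Hk n k).Adj (some a) none ↔ (a = k ∨ a = k + n) := by
  simp [Hk, adjP]

lemma Hk_adj_none_none (k) : ¬ (Hk n k).Adj none none := by
  simp [Hk]

/-- The shift equivalence. -/
def shiftE (k : ZMod (2*n)) : Option (ZMod (2*n)) ≃ Option (ZMod (2*n)) :=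
  Equiv.optionCongr (Equiv.addRight k)

lemma Hk_eq_map (k : ZMod (2*n)) : Hk n k = (Hk n 0).map (shiftE n k).toEmbedding := by
  ext x y
  rw [map_equiv_adj]
  have hs : ∀ a : ZMod (2*n), (shiftE n k).symm (some a) = some (a - k) := fun a => by simp [shiftE, ← Equiv.optionCongr_symm, sub_eq_add_neg]
  have hn' : (shiftE n k).symm none = none := by simp [shiftE]
  rcases x with _ | a <;> rcases y with _ | b
  · rw [hn']
    simp [Hk_adj_none_none]
  · rw [hn', hs]
    rw [Hk_adj_none_some, Hk_adj_none_some]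
    constructor
    · rintro (h | h)
      · left; rw [h]; ring
      · right; rw [h]; ring
    · rintro (h | h)
      · left; linear_combination h
      · right; linear_combination h
  · rw [hn', hs]
    rw [Hk_adj_some_none, Hk_adj_some_none]
    constructor
    · rintro (h | h)
      · left; rw [h]; ring
      · right; rw [h]; ring
    · rintro (h | h)
      · left; linear_combination h
      · right; linear_combination h
  · rw [hs, hs, Hk_adj_some_some, Hk_adj_some_some]
    constructor
    · rintro ⟨hne, h | h⟩
      · exact ⟨fun hh => hne (by linear_combination hh), Or.inl (by linear_combination h)⟩
      · exact ⟨fun hh => hne (by linear_combination hh), Or.inr (by linear_combination h)⟩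
    · rintro ⟨hne, h | h⟩
      · exact ⟨fun hh => hne (by rw [hh]), Or.inl (by linear_combination h)⟩
      · exact ⟨fun hh => hne (by rw [hh]), Or.inr (by linear_combination h)⟩
end constr

section zmod
variable (n : ℕ)

lemma zmod_two_mul_eq_zero_iff (hn : 0 < n) (a : ZMod (2*n)) :
    a + a = 0 ↔ a = 0 ∨ a = (n : ZMod (2*n)) := by
  haveI : NeZero (2*n) := ⟨by omega⟩
  constructor
  · intro h
    have hv : ((a.val + a.val : ℕ) : ZMod (2*n)) = 0 := by
      push_cast
      simp [ZMod.natCast_val, ZMod.cast_id, h]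
    rw [ZMod.natCast_eq_zero_iff] at hv
    have hlt := ZMod.val_lt a
    obtain ⟨c, hc⟩ := hv
    rw [show 2*n*c = 2*(n*c) from by ring] at hc
    have hc' : a.val = n * c := by omega
    have hc2 : c ≤ 1 := by nlinarith
    have hre := ZMod.natCast_rightInverse (n := 2*n) a
    interval_cases c
    · left; rw [← hre]; simp [hc']
    · right; rw [← hre, hc']; simp
  · rintro (rfl | rfl)
    · simp
    · have : ((n : ZMod (2*n)) + n) = ((2*n : ℕ) : ZMod (2*n)) := by push_cast; ring
      rw [this, ZMod.natCast_self]

lemma zmod_two_mul_ne_one (a : ZMod (2*n)) : a + a ≠ 1 := by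
  intro h
  have h2 : (2:ℕ) ∣ 2*n := ⟨n, rfl⟩
  have h3 := congrArg (ZMod.castHom h2 (ZMod 2)) h
  rw [map_add, map_one, CharTwo.add_self_eq_zero] at h3
  exact zero_ne_one h3

lemma zmod_natCast_n_ne_zero (hn : 0 < n) : (n : ZMod (2*n)) ≠ 0 := by
  intro h
  rw [ZMod.natCast_eq_zero_iff] at h
  have := Nat.le_of_dvd hn h
  omega

end zmod

section deg
variable (n : ℕ)

lemma Hk0_nbhd_none (hn : 0 < n) :
    (Hk n 0).neighborSet none = {some (0 : ZMod (2*n)), some ((n : ℕ) : ZMod (2*n))} := by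
  ext x
  rcases x with _ | b
  · simp [SimpleGraph.mem_neighborSet, Hk_adj_none_none]
  · simp only [SimpleGraph.mem_neighborSet, Hk_adj_none_some, Set.mem_insert_iff,
      Set.mem_singleton_iff, Option.some.injEq, zero_add]

lemma Hk0_deg (hn : 0 < n) : ∀ x, ((Hk n 0).neighborSet x).ncard = 2 := by
  haveI : NeZero (2*n) := ⟨by omega⟩
  intro x
  rcases x with _ | a
  · rw [Hk0_nbhd_none n hn, Set.ncard_pair]
    simp only [ne_eq, Option.some.injEq]
    exact fun h => zmod_natCast_n_ne_zero n hn h.symm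
  · by_cases h : a = 0 ∨ a = ((n:ℕ) : ZMod (2*n))
    · have haa : a + a = 0 := (zmod_two_mul_eq_zero_iff n hn a).2 h
      have hne : (1 : ZMod (2*n)) - a ≠ a := by
        intro hh
        exact zmod_two_mul_ne_one n a (by linear_combination -hh)
      have : (Hk n 0).neighborSet (some a) = {none, some (1 - a)} := by
        ext y
        rcases y with _ | b
        · simp only [SimpleGraph.mem_neighborSet, Hk_adj_some_none, Set.mem_insert_iff,
            Set.mem_singleton_iff, zero_add]
          simpa using h
        · simp only [SimpleGraph.mem_neighborSet, Hk_adj_some_some, Set.mem_insert_iff,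
            Set.mem_singleton_iff, Option.some.injEq, mul_zero, zero_add]
          constructor
          · rintro ⟨hab, hs | hs⟩
            · exact absurd (by linear_combination hs - haa) hab.symm
            · exact Or.inr (by linear_combination hs)
          · rintro (h' | rfl)
            · exact absurd h' (by simp)
            · exact ⟨Ne.symm hne, Or.inr (by ring)⟩
      rw [this, Set.ncard_pair (by simp)]
    · push_neg at h
      have haa : a + a ≠ 0 := by
        intro hh
        rcases (zmod_two_mul_eq_zero_iff n hn a).1 hh with h' | h'
        · exact h.1 h'
        · exact h.2 h'
      have h01 : (0 : ZMod (2*n)) ≠ 1 := by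
        have := zmod_two_mul_ne_one n 0; simpa using this
      have hne1 : -a ≠ a := fun hh => haa (by linear_combination -hh)
      have hne2 : (1 : ZMod (2*n)) - a ≠ a := by
        intro hh
        exact zmod_two_mul_ne_one n a (by linear_combination -hh)
      have : (Hk n 0).neighborSet (some a) = {some (-a), some (1 - a)} := by
        ext y
        rcases y with _ | b
        · simp only [SimpleGraph.mem_neighborSet, Hk_adj_some_none, Set.mem_insert_iff,
            Set.mem_singleton_iff, zero_add]
          constructor
          · rintro (h' | h')
            · exact absurd h' h.1
            · exact absurd h' h.2
          · rintro (h' | h') <;> simp_all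
        · simp only [SimpleGraph.mem_neighborSet, Hk_adj_some_some, Set.mem_insert_iff,
            Set.mem_singleton_iff, Option.some.injEq, mul_zero, zero_add]
          constructor
          · rintro ⟨hab, hs | hs⟩
            · exact Or.inl (by linear_combination hs)
            · exact Or.inr (by linear_combination hs)
          · rintro (rfl | rfl)
            · exact ⟨Ne.symm hne1, Or.inl (by ring)⟩
            · exact ⟨Ne.symm hne2, Or.inr (by ring)⟩
      rw [this, Set.ncard_pair]
      simp only [ne_eq, Option.some.injEq]
      intro hh
      exact h01 (by linear_combination hh)
end deg

section conn
variable (n : ℕ)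

/-- Position of a vertex along the zigzag Hamiltonian path `0, 1, -1, 2, -2, …, n`. -/
def zidx (a : ZMod (2*n)) : ℕ :=
  if a.val = 0 then 0 else if a.val ≤ n then 2*a.val - 1 else 2*(2*n - a.val)

lemma Hk0_reach (hn : 0 < n) : ∀ a : ZMod (2*n), (Hk n 0).Reachable (some a) none := by
  haveI : NeZero (2*n) := ⟨by omega⟩
  suffices h : ∀ N : ℕ, ∀ a : ZMod (2*n), zidx n a ≤ N → (Hk n 0).Reachable (some a) none by
    intro a; exact h (zidx n a) a le_rfl
  intro N
  induction N with
  | zero =>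
    intro a ha
    have hm : a.val = 0 := by
      have hvl := ZMod.val_lt a
      by_contra hm
      unfold zidx at ha
      rw [if_neg hm] at ha
      split at ha <;> [skip; skip] <;> omega
    have ha0 : a = 0 := by
      have := ZMod.natCast_rightInverse (n := 2*n) a
      rw [← this, hm]; simp
    subst ha0
    exact SimpleGraph.Adj.reachable (by rw [Hk_adj_some_none]; left; rfl)
  | succ N ih =>
    intro a ha
    set m := a.val with hmv
    have hre : ((m : ℕ) : ZMod (2*n)) = a := ZMod.natCast_rightInverse a
    have hlt : m < 2*n := ZMod.val_lt a
    rcases Nat.eq_zero_or_pos m with hm0 | hmpos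
    · have ha0 : a = 0 := by rw [← hre, hm0]; simp
      subst ha0
      exact SimpleGraph.Adj.reachable (by rw [Hk_adj_some_none]; left; rfl)
    by_cases hmn : m ≤ n
    · -- a = m with 1 ≤ m ≤ n; step to b = 1 - a
      set b : ZMod (2*n) := 1 - a with hb
      have hadj : (Hk n 0).Adj (some a) (some b) := by
        rw [Hk_adj_some_some]
        refine ⟨fun hh => zmod_two_mul_ne_one n a (by linear_combination hh), Or.inr (by ring)⟩
      have hidxa : zidx n a = 2*m - 1 := by
        unfold zidx; rw [if_neg (by omega), if_pos hmn]
      have hbidx : zidx n b < 2*m - 1 := by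
        rcases Nat.eq_or_lt_of_le hmpos with h1 | h2
        · -- m = 1, b = 0
          have hb0 : b = 0 := by
            rw [hb, ← hre, ← h1]
            push_cast
            ring
          have : b.val = 0 := by rw [hb0]; simp [ZMod.val_zero]
          unfold zidx; rw [if_pos this]; omega
        · -- m ≥ 2
          have h2n : ((2*n : ℕ) : ZMod (2*n)) = 0 := ZMod.natCast_self _
          have hbe : b = ((2*n + 1 - m : ℕ) : ZMod (2*n)) := by
            rw [hb, ← hre, Nat.cast_sub (by omega)]
            push_cast at h2n ⊢
            linear_combination -h2n
          have hbv : b.val = 2*n + 1 - m := by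
            rw [hbe, ZMod.val_cast_of_lt (by omega)]
          unfold zidx
          rw [if_neg (by omega), if_neg (by omega), hbv]
          omega
      have : zidx n b ≤ N := by omega
      exact hadj.reachable.trans (ih b this)
    · -- m > n; step to b = -a
      push_neg at hmn
      set b : ZMod (2*n) := -a with hb
      have hanz : a ≠ 0 := by
        intro hh; rw [hh] at hmv; simp [ZMod.val_zero] at hmv; omega
      have hann : a ≠ ((n:ℕ) : ZMod (2*n)) := by
        intro hh
        rw [hh] at hmv
        rw [ZMod.val_cast_of_lt (by omega)] at hmv
        omega
      have hadj : (Hk n 0).Adj (some a) (some b) := by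
        rw [Hk_adj_some_some]
        refine ⟨?_, Or.inl (by ring)⟩
        intro hh
        have : a + a = 0 := by rw [hb] at hh; linear_combination hh
        rcases (zmod_two_mul_eq_zero_iff n hn a).1 this with h' | h'
        · exact hanz h'
        · exact hann h'
      have h2n : ((2*n : ℕ) : ZMod (2*n)) = 0 := ZMod.natCast_self _
      have hbe : b = ((2*n - m : ℕ) : ZMod (2*n)) := by
        rw [hb, ← hre, Nat.cast_sub (by omega)]
        push_cast at h2n ⊢
        linear_combination -h2n
      have hbv : b.val = 2*n - m := by
        rw [hbe, ZMod.val_cast_of_lt (by omega)]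
      have hidxa : zidx n a = 2*(2*n - m) := by
        unfold zidx; rw [if_neg (by omega), if_neg (by omega)]
      have hbidx : zidx n b = 2*(2*n - m) - 1 := by
        unfold zidx; rw [hbv, if_neg (by omega), if_pos (by omega)]
      have : zidx n b ≤ N := by omega
      exact hadj.reachable.trans (ih b this)

lemma Hk0_connected (hn : 0 < n) : (Hk n 0).Connected := by
  haveI : NeZero (2*n) := ⟨by omega⟩
  rw [SimpleGraph.connected_iff_exists_forall_reachable]
  refine ⟨none, fun w => ?_⟩
  rcases w with _ | a
  · exact SimpleGraph.Reachable.refl _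
  · exact (Hk0_reach n hn a).symm
end conn

lemma neighborSet_map_equiv {V W : Type*} (e : V ≃ W) (H : SimpleGraph V) (w : W) :
    (H.map e.toEmbedding).neighborSet w = e '' (H.neighborSet (e.symm w)) := by
  ext z
  simp only [SimpleGraph.mem_neighborSet, Set.mem_image, map_equiv_adj]
  constructor
  · intro hz; exact ⟨e.symm z, hz, by simp⟩
  · rintro ⟨u, hu, rfl⟩; simpa using hu

lemma isHamCycle_map {V W : Type*} [Fintype V] [Fintype W] (e : V ≃ W)
    (H : SimpleGraph V) (h : IsHamCycle H) : IsHamCycle (H.map e.toEmbedding) := by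
  constructor
  · exact ((SimpleGraph.Iso.map e H).connected_iff).mp h.1
  · intro w
    rw [_root_.neighborSet_map_equiv, Set.ncard_image_of_injective _ e.injective]
    exact h.2 _

lemma Hk_isHamCycle (n : ℕ) [NeZero (2*n)] (hn : 0 < n) (k : ZMod (2*n)) :
    IsHamCycle (Hk n k) := by
  rw [Hk_eq_map]
  exact isHamCycle_map _ _ ⟨Hk0_connected n hn, Hk0_deg n hn⟩

section keys
variable (n : ℕ)

lemma key1 (hn : 0 < n) (s : ZMod (2*n)) :
    ∃! k : Fin n, s = 2*((k:ℕ):ZMod (2*n)) ∨ s = 2*((k:ℕ):ZMod (2*n)) + 1 := by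
  haveI : NeZero (2*n) := ⟨by omega⟩
  have hlt := ZMod.val_lt s
  have hre : ((s.val : ℕ) : ZMod (2*n)) = s := ZMod.natCast_rightInverse s
  refine ⟨⟨s.val / 2, by omega⟩, ?_, ?_⟩
  · rcases Nat.mod_two_eq_zero_or_one s.val with h | h
    · left
      show s = 2 * ((s.val / 2 : ℕ) : ZMod (2*n))
      conv_lhs => rw [← hre, show s.val = 2*(s.val/2) + s.val % 2 from by omega]
      rw [h]
      push_cast; ring
    · right
      show s = 2 * ((s.val / 2 : ℕ) : ZMod (2*n)) + 1
      conv_lhs => rw [← hre, show s.val = 2*(s.val/2) + s.val % 2 from by omega]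
      rw [h]
      push_cast; ring
  · rintro ⟨j, hj⟩ (h | h)
    · have : s.val = 2*j := by
        rw [h, show (2*((j:ℕ):ZMod (2*n)) : ZMod (2*n)) = ((2*j : ℕ) : ZMod (2*n)) by push_cast; ring,
          ZMod.val_cast_of_lt (by omega)]
      apply Fin.ext; simp; omega
    · have : s.val = 2*j + 1 := by
        rw [h, show (2*((j:ℕ):ZMod (2*n)) + 1 : ZMod (2*n)) = ((2*j + 1 : ℕ) : ZMod (2*n)) by push_cast; ring,
          ZMod.val_cast_of_lt (by omega)]
      apply Fin.ext; simp; omega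

lemma key2 (hn : 0 < n) (a : ZMod (2*n)) :
    ∃! k : Fin n, a = ((k:ℕ):ZMod (2*n)) ∨ a = ((k:ℕ):ZMod (2*n)) + (n : ZMod (2*n)) := by
  haveI : NeZero (2*n) := ⟨by omega⟩
  have hlt := ZMod.val_lt a
  have hre : ((a.val : ℕ) : ZMod (2*n)) = a := ZMod.natCast_rightInverse a
  refine ⟨⟨a.val % n, Nat.mod_lt _ hn⟩, ?_, ?_⟩
  · by_cases h : a.val < n
    · left
      show a = ((a.val % n : ℕ) : ZMod (2*n))
      rw [Nat.mod_eq_of_lt h, hre]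
    · right
      have hmod : a.val % n = a.val - n := by
        conv_lhs => rw [show a.val = (a.val - n) + n from by omega]
        rw [Nat.add_mod_right, Nat.mod_eq_of_lt (by omega)]
      show a = ((a.val % n : ℕ) : ZMod (2*n)) + (n : ZMod (2*n))
      conv_lhs => rw [← hre, show a.val = (a.val % n) + n from by omega]
      push_cast; ring
  · rintro ⟨j, hj⟩ (h | h)
    · have hv : a.val = j := by rw [h, ZMod.val_cast_of_lt (by omega)]
      have : a.val % n = a.val := Nat.mod_eq_of_lt (by omega)
      apply Fin.ext; simp; omega
    · have hv : a.val = j + n := by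
        rw [h, show (((j:ℕ):ZMod (2*n)) + (n:ZMod (2*n)) : ZMod (2*n)) = ((j + n : ℕ) : ZMod (2*n)) by push_cast; ring,
          ZMod.val_cast_of_lt (by omega)]
      have : a.val % n = j := by rw [hv, Nat.add_mod_right, Nat.mod_eq_of_lt hj]
      apply Fin.ext; simp; omega
end keys

section hcsW
variable (n : ℕ)

lemma isHCS_W [NeZero (2*n)] (hn : 0 < n) :
    IsHCS (Set.range (fun k : Fin n => Hk n ((k:ℕ) : ZMod (2*n)))) := by
  constructor
  · rintro H ⟨k, rfl⟩
    exact Hk_isHamCycle n hn _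
  · intro e he
    induction e using Sym2.ind with
    | _ x y =>
    rw [SimpleGraph.mem_edgeSet, SimpleGraph.top_adj] at he
    rcases x with _ | a <;> rcases y with _ | b
    · exact absurd rfl he
    · obtain ⟨k, hk, huniq⟩ := key2 n hn b
      refine ⟨Hk n ((k:ℕ):ZMod (2*n)), ⟨⟨k, rfl⟩, ?_⟩, ?_⟩
      · rw [SimpleGraph.mem_edgeSet, Hk_adj_none_some]; exact hk
      · rintro G ⟨⟨j, rfl⟩, hG⟩
        rw [SimpleGraph.mem_edgeSet, Hk_adj_none_some] at hG
        rw [huniq j hG]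
    · obtain ⟨k, hk, huniq⟩ := key2 n hn a
      refine ⟨Hk n ((k:ℕ):ZMod (2*n)), ⟨⟨k, rfl⟩, ?_⟩, ?_⟩
      · rw [SimpleGraph.mem_edgeSet, Hk_adj_some_none]; exact hk
      · rintro G ⟨⟨j, rfl⟩, hG⟩
        rw [SimpleGraph.mem_edgeSet, Hk_adj_some_none] at hG
        rw [huniq j hG]
    · obtain ⟨k, hk, huniq⟩ := key1 n hn (a + b)
      have hne : a ≠ b := fun h => he (by rw [h])
      refine ⟨Hk n ((k:ℕ):ZMod (2*n)), ⟨⟨k, rfl⟩, ?_⟩, ?_⟩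
      · rw [SimpleGraph.mem_edgeSet, Hk_adj_some_some]; exact ⟨hne, hk⟩
      · rintro G ⟨⟨j, rfl⟩, hG⟩
        rw [SimpleGraph.mem_edgeSet, Hk_adj_some_some] at hG
        rw [huniq j hG.2]
end hcsW

lemma isHCS_map {V W : Type*} [Fintype V] [Fintype W] (e : V ≃ W)
    (𝓗 : Set (SimpleGraph V)) (h : IsHCS 𝓗) :
    IsHCS ((fun H => H.map e.toEmbedding) '' 𝓗) := by
  constructor
  · rintro G ⟨H, hH, rfl⟩
    exact isHamCycle_map e H (h.1 H hH)
  · intro f hf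
    induction f using Sym2.ind with
    | _ x y =>
    rw [SimpleGraph.mem_edgeSet, SimpleGraph.top_adj] at hf
    have hxy : (e.symm x) ≠ (e.symm y) := fun hh => hf (by simpa using congrArg e hh)
    obtain ⟨H, ⟨hH, hmem⟩, huniq⟩ := h.2 s(e.symm x, e.symm y)
      (by rw [SimpleGraph.mem_edgeSet]; exact hxy)
    refine ⟨H.map e.toEmbedding, ⟨⟨H, hH, rfl⟩, ?_⟩, ?_⟩
    · rw [SimpleGraph.mem_edgeSet] at hmem ⊢
      rw [map_equiv_adj]; exact hmem
    · rintro G ⟨⟨H', hH', rfl⟩, hG⟩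
      rw [SimpleGraph.mem_edgeSet, map_equiv_adj] at hG
      rw [huniq H' ⟨hH', hG⟩]

/-- A Hamiltonian cycle system of order `v` exists iff `v` is odd and `v ≥ 3`. -/
theorem hcs_exists_iff (v : ℕ) :
    (∃ 𝓗 : Set (SimpleGraph (Fin v)), 𝓗.Nonempty ∧ IsHCS 𝓗) ↔ Odd v ∧ 3 ≤ v := by
  constructor
  · rintro ⟨𝓗, ⟨H0, hH0⟩, hcyc, hpart⟩
    have hham := hcyc H0 hH0
    have hv0 : 0 < v := by
      have : Nonempty (Fin v) := hham.1.nonempty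
      exact Fin.pos_iff_nonempty.mpr this
    set x : Fin v := ⟨0, hv0⟩ with hx
    have h3 : 3 ≤ v := by
      have hN : (H0.neighborSet x).ncard = 2 := hham.2 x
      have hfin : (H0.neighborSet x).Finite := Set.toFinite _
      have hxN : x ∉ H0.neighborSet x := fun h => H0.irrefl h
      have hins : (insert x (H0.neighborSet x)).ncard = 3 := by
        rw [Set.ncard_insert_of_notMem hxN hfin, hN]
      calc 3 = (insert x (H0.neighborSet x)).ncard := hins.symm
        _ ≤ (Set.univ : Set (Fin v)).ncard :=
            Set.ncard_le_ncard (Set.subset_univ _) Set.finite_univ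
        _ = v := by rw [Set.ncard_univ]; simp
    refine ⟨?_, h3⟩
    classical
    have hfinH : 𝓗.Finite := Set.toFinite 𝓗
    set T := hfinH.toFinset with hT
    have hsplit : (Finset.univ.erase x) = T.biUnion
        (fun H => (Set.toFinite (H.neighborSet x)).toFinset) := by
      ext y
      simp only [Finset.mem_erase, Finset.mem_univ, and_true, Finset.mem_biUnion,
        Set.Finite.mem_toFinset, SimpleGraph.mem_neighborSet, hT]
      constructor
      · intro hy
        obtain ⟨H, ⟨hH, hmem⟩, -⟩ := hpart s(x, y)
          (by rw [SimpleGraph.mem_edgeSet, SimpleGraph.top_adj]; exact Ne.symm hy)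
        exact ⟨H, hH, (SimpleGraph.mem_edgeSet H).1 hmem⟩
      · rintro ⟨H, hH, hadj⟩
        exact hadj.ne'
    have hdisj : ∀ H1 ∈ T, ∀ H2 ∈ T, H1 ≠ H2 →
        Disjoint ((Set.toFinite (H1.neighborSet x)).toFinset)
          ((Set.toFinite (H2.neighborSet x)).toFinset) := by
      intro H1 h1 H2 h2 hne
      rw [Finset.disjoint_left]
      intro y hy1 hy2
      rw [Set.Finite.mem_toFinset, SimpleGraph.mem_neighborSet] at hy1 hy2
      rw [hT, Set.Finite.mem_toFinset] at h1 h2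
      obtain ⟨Hu, -, huniq⟩ := hpart s(x, y)
        (by rw [SimpleGraph.mem_edgeSet, SimpleGraph.top_adj]; exact hy1.ne)
      exact hne ((huniq H1 ⟨h1, (SimpleGraph.mem_edgeSet H1).2 hy1⟩).trans
        (huniq H2 ⟨h2, (SimpleGraph.mem_edgeSet H2).2 hy2⟩).symm)
    have hcards : ∀ H ∈ T, ((Set.toFinite (H.neighborSet x)).toFinset).card = 2 := by
      intro H hH
      rw [hT, Set.Finite.mem_toFinset] at hH
      rw [← Set.ncard_eq_toFinset_card]
      exact (hcyc H hH).2 x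
    have hcard : v - 1 = 2 * T.card := by
      have h1 : (Finset.univ.erase x).card = v - 1 := by
        rw [Finset.card_erase_of_mem (Finset.mem_univ x)]; simp
      rw [← h1, hsplit, Finset.card_biUnion hdisj, Finset.sum_congr rfl hcards,
        Finset.sum_const, smul_eq_mul, mul_comm]
    rw [Nat.odd_iff]; omega
  · rintro ⟨hodd, h3⟩
    obtain ⟨n, hn⟩ := hodd
    have hnpos : 0 < n := by omega
    haveI : NeZero (2*n) := ⟨by omega⟩
    have hcard : Fintype.card (Option (ZMod (2*n))) = v := by
      simp [ZMod.card]; omega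
    let e := Fintype.equivFinOfCardEq hcard
    haveI : Nonempty (Fin n) := ⟨⟨0, hnpos⟩⟩
    refine ⟨(fun H => H.map e.toEmbedding) ''
      (Set.range (fun k : Fin n => Hk n ((k:ℕ) : ZMod (2*n)))), ?_, ?_⟩
    · exact (Set.range_nonempty _).image _
    · exact isHCS_map e _ (isHCS_W n hnpos)
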